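/- Let π and ρ be probability measures on [0,1]^d that are absolutely continuous with respect to Lebesgue measure, with unnormalized densities f̂_π = c_π f_π and f̂_ρ = c_ρ f_ρ, where c_π, c_ρ > 0 and f_π, f_ρ are the (normalized) Lebesgue densities. Then d_H(π, ρ) ≤ (2 / √c_ρ) · ‖√f̂_π − √f̂_ρ‖_{L²([0,1]^d)}. -/

import Mathlib

open MeasureTheory

noncomputable section

lemma norm_toLp_two {α : Type*} [MeasurableSpace α] {μ : Measure α} {f : α → ℝ}
    (hf : MemLp f 2 μ) : ‖hf.toLp f‖ = Real.sqrt (∫ x, f x ^ 2 ∂μ) := by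
  have h1 : (‖hf.toLp f‖ : ℝ) ^ 2 = ∫ x, f x ^ 2 ∂μ := by
    rw [← real_inner_self_eq_norm_sq, MeasureTheory.L2.inner_def]
    refine integral_congr_ae ?_
    filter_upwards [hf.coeFn_toLp] with x hx
    simp [hx, real_inner_eq_norm_mul_self_add_norm_mul_self_sub_norm_sub_mul_self_div_two]
  rw [← h1, Real.sqrt_sq (norm_nonneg _)]

def cube (d : ℕ) : Set (Fin d → ℝ) := Set.univ.pi fun _ => Set.Icc (0:ℝ) 1

lemma cube_measurable (d : ℕ) : MeasurableSet (cube d) :=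
  MeasurableSet.univ_pi fun _ => measurableSet_Icc

theorem stmt8 (d : ℕ) (hd : 0 < d)
    (fpi frho : (Fin d → ℝ) → ℝ) (cpi crho : ℝ) (hcpi : 0 < cpi) (hcrho : 0 < crho)
    (hfpim : Measurable fpi) (hfrhom : Measurable frho)
    (hfpinn : ∀ x ∈ cube d, 0 ≤ fpi x) (hfrhonn : ∀ x ∈ cube d, 0 ≤ frho x)
    (hfpi1 : ∫ x in cube d, fpi x = 1) (hfrho1 : ∫ x in cube d, frho x = 1)
    (π ρ : Measure (Fin d → ℝ))
    (hπ : π = (volume.restrict (cube d)).withDensity fun x => ENNReal.ofReal (fpi x))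
    (hρ : ρ = (volume.restrict (cube d)).withDensity fun x => ENNReal.ofReal (frho x)) :
    Real.sqrt (∫ x in cube d, (Real.sqrt (fpi x) - Real.sqrt (frho x)) ^ 2)
      ≤ (2 / Real.sqrt crho) *
        Real.sqrt (∫ x in cube d,
          (Real.sqrt (cpi * fpi x) - Real.sqrt (crho * frho x)) ^ 2) := by
  set μ := volume.restrict (cube d) with hμ
  set g : (Fin d → ℝ) → ℝ := fun x => Real.sqrt (fpi x) with hg
  set h : (Fin d → ℝ) → ℝ := fun x => Real.sqrt (frho x) with hh
  set a := Real.sqrt cpi with ha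
  set b := Real.sqrt crho with hb
  have hb0 : 0 < b := Real.sqrt_pos.mpr hcrho
  have ha0 : 0 ≤ a := Real.sqrt_nonneg _
  -- a.e. nonnegativity on μ
  have haepi : ∀ᵐ x ∂μ, 0 ≤ fpi x :=
    ae_restrict_of_forall_mem (cube_measurable d) hfpinn
  have haerho : ∀ᵐ x ∂μ, 0 ≤ frho x :=
    ae_restrict_of_forall_mem (cube_measurable d) hfrhonn
  have hgsq : ∀ᵐ x ∂μ, g x ^ 2 = fpi x := by
    filter_upwards [haepi] with x hx using Real.sq_sqrt hx
  have hhsq : ∀ᵐ x ∂μ, h x ^ 2 = frho x := by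
    filter_upwards [haerho] with x hx using Real.sq_sqrt hx
  -- integrability
  have hipi : Integrable fpi μ := by
    refine Integrable.of_integral_ne_zero ?_
    rw [hfpi1]; norm_num
  have hirho : Integrable frho μ := by
    refine Integrable.of_integral_ne_zero ?_
    rw [hfrho1]; norm_num
  have hgmeas : Measurable g := Real.continuous_sqrt.measurable.comp hfpim
  have hgm : MemLp g 2 μ := by
    rw [memLp_two_iff_integrable_sq hgmeas.aestronglyMeasurable]
    exact hipi.congr (hgsq.mono fun x hx => hx.symm)
  have hhmeas : Measurable h := Real.continuous_sqrt.measurable.comp hfrhom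
  have hhm : MemLp h 2 μ := by
    rw [memLp_two_iff_integrable_sq hhmeas.aestronglyMeasurable]
    exact hirho.congr (hhsq.mono fun x hx => hx.symm)
  -- Lp elements
  set G := hgm.toLp g with hG
  set H := hhm.toLp h with hH
  have hnG : ‖G‖ = 1 := by
    rw [hG, norm_toLp_two]
    rw [integral_congr_ae hgsq, hfpi1, Real.sqrt_one]
  have hnH : ‖H‖ = 1 := by
    rw [hH, norm_toLp_two]
    rw [integral_congr_ae hhsq, hfrho1, Real.sqrt_one]
  -- LHS = ‖G - H‖
  have hLHS : Real.sqrt (∫ x in cube d, (Real.sqrt (fpi x) - Real.sqrt (frho x)) ^ 2)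
      = ‖G - H‖ := by
    rw [hG, hH, ← MemLp.toLp_sub, norm_toLp_two]
    simp only [Pi.sub_apply, hg, hh]
    rfl
  -- RHS norm
  have hgsm : MemLp (a • g) 2 μ := hgm.const_smul a
  have hhsm : MemLp (b • h) 2 μ := hhm.const_smul b
  have hRHSeq : Real.sqrt (∫ x in cube d,
        (Real.sqrt (cpi * fpi x) - Real.sqrt (crho * frho x)) ^ 2)
      = ‖a • G - b • H‖ := by
    have h2 : a • G - b • H = (hgsm.sub hhsm).toLp (a • g - b • h) := by
      rw [MemLp.toLp_sub, hG, hH, ← MemLp.toLp_const_smul, ← MemLp.toLp_const_smul]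
    rw [h2, norm_toLp_two]
    congr 1
    refine integral_congr_ae ?_
    filter_upwards with x
    simp only [Pi.sub_apply, Pi.smul_apply, smul_eq_mul, hg, hh, ha, hb]
    rw [Real.sqrt_mul hcpi.le, Real.sqrt_mul hcrho.le]
  rw [hLHS, hRHSeq]
  -- core inequality
  set E := ‖a • G - b • H‖ with hE
  have hab : |a - b| ≤ E := by
    calc |a - b| = |‖a • G‖ - ‖b • H‖| := by
          rw [norm_smul, norm_smul, hnG, hnH, Real.norm_eq_abs, Real.norm_eq_abs,
            abs_of_nonneg ha0, abs_of_nonneg hb0.le, mul_one, mul_one]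
      _ ≤ ‖a • G - b • H‖ := abs_norm_sub_norm_le _ _
  have hkey : b * ‖G - H‖ ≤ 2 * E := by
    have h3 : b • G - b • H = (a • G - b • H) - (a - b) • G := by
      module
    calc b * ‖G - H‖ = ‖b • (G - H)‖ := by
          rw [norm_smul, Real.norm_eq_abs, abs_of_nonneg hb0.le]
      _ = ‖(a • G - b • H) - (a - b) • G‖ := by rw [smul_sub, h3]
      _ ≤ ‖a • G - b • H‖ + ‖(a - b) • G‖ := norm_sub_le _ _
      _ = E + |a - b| := by rw [norm_smul, Real.norm_eq_abs, hnG, mul_one]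
      _ ≤ E + E := by linarith
      _ = 2 * E := by ring
  rw [div_mul_eq_mul_div, le_div_iff₀ hb0, mul_comm]
  linarith
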